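/- Fix nonnegative integers n_1, …, n_r. Then the sum, over all r-tuples ν = (ν^{(1)}, …, ν^{(r)}) of partitions with ν^{(i)} a partition of n_i, of Π_{n≥1} Π_{k=1}^r binom(P^{(k)}_n(d_n(ν)) + ν^{(k)}_n, ν^{(k)}_n) equals the sum, over all valid labels 𝐝 = (d_0, …, d_s) for the data (ℓ_a, m_a) whose final term satisfies d_s = (n_1, …, n_r), of mult(𝐝); moreover every summand mult(𝐝) in the latter sum is a positive integer. -/

import Mathlib

open Finset

def Pfun {r N : ℕ} (C : Matrix (Fin r) (Fin r) ℤ) (ℓ : Fin N → Fin r) (m : Fin N → ℕ)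
    (n : ℕ) (k : Fin r) (d : Fin r → ℤ) : ℤ :=
  (∑ a : Fin N, (min n (m a) : ℤ) * (if k = ℓ a then 1 else 0)) - ∑ j : Fin r, C j k * d j

def dAt {r : ℕ} (L : List (Fin r → ℤ)) (n : ℕ) : Fin r → ℤ := L.getD n 0

def deltaAt {r : ℕ} (L : List (Fin r → ℤ)) (i : ℕ) : Fin r → ℤ :=
  if i < L.length then dAt L i - dAt L (i - 1) else 0

def IsValidLabel {r N : ℕ} (C : Matrix (Fin r) (Fin r) ℤ) (ℓ : Fin N → Fin r)
    (m : Fin N → ℕ) (L : List (Fin r → ℤ)) : Prop :=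
  L ≠ [] ∧ dAt L 0 = 0 ∧
  (∀ i, 1 ≤ i → i < L.length → dAt L (i - 1) < dAt L i) ∧
  (∀ n, n < L.length → ∀ k, 0 ≤ Pfun C ℓ m n k (dAt L n)) ∧
  (∀ i, 1 ≤ i → i < L.length → deltaAt L (i + 1) ≤ deltaAt L i)

def ibinom (a b : ℤ) : ℕ := if a < b then 0 else Nat.choose a.toNat b.toNat

def mult {r N : ℕ} (C : Matrix (Fin r) (Fin r) ℤ) (ℓ : Fin N → Fin r) (m : Fin N → ℕ)
    (L : List (Fin r → ℤ)) : ℕ :=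
  ∏ n ∈ Finset.Icc 1 (L.length - 1), ∏ k : Fin r,
    ibinom (Pfun C ℓ m n k (dAt L n) + (deltaAt L n k - deltaAt L (n + 1) k))
      (deltaAt L n k - deltaAt L (n + 1) k)

def dnu {r : ℕ} {nn : Fin r → ℕ} (ν : ∀ k : Fin r, Nat.Partition (nn k)) (n : ℕ) :
    Fin r → ℤ :=
  fun k => ((ν k).parts.map fun h => (min n h : ℤ)).sum

section Aux

lemma ibinom_zero {a : ℤ} (h : 0 ≤ a) : ibinom a 0 = 1 := by
  rw [ibinom, if_neg (by omega)]; simp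

lemma ibinom_neg {a b : ℤ} (h : a < b) : ibinom a b = 0 := by
  rw [ibinom, if_pos h]

lemma ibinom_pos {a b : ℤ} (hb : 0 ≤ b) (hab : b ≤ a) : 0 < ibinom a b := by
  rw [ibinom, if_neg (by omega)]
  exact Nat.choose_pos (by omega)

lemma tele (f : ℕ → ℤ) (t : ℕ) :
    ∑ h ∈ Finset.Icc 1 t, (f h - f (h - 1)) = f t - f 0 := by
  induction t with
  | zero => simp
  | succ t ih => rw [Finset.sum_Icc_succ_top (by omega), ih]; simp

lemma abelmin (e : ℕ → ℤ) (n s : ℕ) :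
    ∑ h ∈ Finset.Icc 1 s, (e h - e (h + 1)) * min (n : ℤ) (h : ℤ)
      = (∑ h ∈ Finset.Icc 1 (min n s), e h) - e (s + 1) * min (n : ℤ) (s : ℤ) := by
  induction s with
  | zero => simp
  | succ s ih =>
    rw [Finset.sum_Icc_succ_top (by omega), ih]
    rcases le_or_gt n s with h | h
    · have h1 : min n (s+1) = min n s := by omega
      have h2 : min (n:ℤ) (s:ℤ) = (n:ℤ) := by
        rw [min_eq_left]; exact_mod_cast h
      have h3 : min (n:ℤ) ((s:ℤ)+1) = (n:ℤ) := by
        rw [min_eq_left]; push_cast; omega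
      have h4 : ((s:ℤ)+1) = (((s+1):ℕ):ℤ) := by push_cast; ring
      rw [h1, ← h4, h3, h2]
      ring
    · have h1 : min n (s+1) = s + 1 := by omega
      have h2 : min (n:ℤ) (s:ℤ) = (s:ℤ) := by rw [min_eq_right]; exact_mod_cast h.le
      have h3 : min (n:ℤ) ((s:ℤ)+1) = ((s:ℤ)+1) := by rw [min_eq_right]; push_cast; omega
      have h4 : ((s:ℤ)+1) = (((s+1):ℕ):ℤ) := by push_cast; ring
      have h5 : min n s = s := by omega
      rw [h1, Finset.sum_Icc_succ_top (by omega), ← h4, h3, h5, h2]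
      ring

lemma prod_range_shift {Mo : Type*} [CommMonoid Mo] (f : ℕ → Mo) (s : ℕ) :
    ∏ n ∈ Finset.range s, f (n + 1) = ∏ n ∈ Finset.Icc 1 s, f n := by
  induction s with
  | zero => simp
  | succ s ih => rw [Finset.prod_range_succ, ih, Finset.prod_Icc_succ_top (by omega)]

lemma card_filter_split (n : ℕ) (M : Multiset ℕ) :
    (Multiset.card (M.filter fun h => n ≤ h))
      = M.count n + Multiset.card (M.filter fun h => n + 1 ≤ h) := by
  induction M using Multiset.induction_on with
  | empty => simp
  | cons a M ih =>
    rw [Multiset.filter_cons, Multiset.filter_cons, Multiset.count_cons]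
    split_ifs <;> simp_all <;> omega

lemma min_map_succ (n : ℕ) (M : Multiset ℕ) :
    (M.map fun h : ℕ => min ((n:ℤ)+1) (h:ℤ)).sum
      = (M.map fun h : ℕ => min (n:ℤ) (h:ℤ)).sum
        + (Multiset.card (M.filter fun h => n + 1 ≤ h) : ℤ) := by
  induction M using Multiset.induction_on with
  | empty => simp
  | cons a M ih =>
    rw [Multiset.map_cons, Multiset.sum_cons, Multiset.map_cons, Multiset.sum_cons,
      Multiset.filter_cons, ih]
    by_cases h2 : n + 1 ≤ a
    · have hm : min ((n:ℤ)+1) (a:ℤ) = min (n:ℤ) (a:ℤ) + 1 := by omega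
      simp [h2, hm]; push_cast; ring
    · have hm : min ((n:ℤ)+1) (a:ℤ) = min (n:ℤ) (a:ℤ) := by omega
      simp [h2, hm]; ring

lemma map_sum_replicate (g : ℕ → ℤ) (c : ℕ → ℕ) (t : Finset ℕ) :
    ((∑ h ∈ t, Multiset.replicate (c h) h).map g).sum = ∑ h ∈ t, (c h : ℤ) * g h := by
  induction t using Finset.cons_induction with
  | empty => simp
  | cons a t ha ih =>
    rw [Finset.sum_cons, Multiset.map_add, Multiset.sum_add, ih, Finset.sum_cons,
      Multiset.map_replicate, Multiset.sum_replicate]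
    simp [nsmul_eq_mul]

end Aux

section KR

variable {r N : ℕ} {nn : Fin r → ℕ}

lemma dnu_eq (ν : ∀ k : Fin r, Nat.Partition (nn k)) (n : ℕ) (k : Fin r) :
    dnu ν n k = ((ν k).parts.map fun h : ℕ => min (n:ℤ) (h:ℤ)).sum := by
  show (Multiset.map _ _).sum = _
  simp [Multiset.bind_def, Multiset.pure_def, Multiset.bind_singleton, Multiset.map_map]

def Del (ν : ∀ k : Fin r, Nat.Partition (nn k)) (n : ℕ) (k : Fin r) : ℤ :=
  (Multiset.card ((ν k).parts.filter fun h => n ≤ h) : ℤ)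

def sMax (ν : ∀ k : Fin r, Nat.Partition (nn k)) : ℕ :=
  Finset.univ.sup fun k => (ν k).parts.sup

def Lab (ν : ∀ k : Fin r, Nat.Partition (nn k)) : List (Fin r → ℤ) :=
  (List.range (sMax ν + 1)).map (dnu ν)

lemma dnu_zero (ν : ∀ k : Fin r, Nat.Partition (nn k)) : dnu ν 0 = 0 := by
  funext k
  rw [dnu_eq]
  have h0 : ∀ h : ℕ, min (((0:ℕ)):ℤ) (h:ℤ) = 0 := fun h => by omega
  simp [h0]

lemma dnu_succ (ν : ∀ k : Fin r, Nat.Partition (nn k)) (n : ℕ) (k : Fin r) :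
    dnu ν (n + 1) k = dnu ν n k + Del ν (n + 1) k := by
  rw [dnu_eq, dnu_eq]
  have hcast : ∀ h : ℕ, min (((n+1:ℕ)):ℤ) (h:ℤ) = min ((n:ℤ)+1) (h:ℤ) := fun h => by
    push_cast; rfl
  simp only [hcast]
  exact min_map_succ n _

lemma Del_nonneg (ν : ∀ k : Fin r, Nat.Partition (nn k)) (n : ℕ) (k : Fin r) :
    0 ≤ Del ν n k := by
  exact Int.natCast_nonneg _

lemma Del_sub_count (ν : ∀ k : Fin r, Nat.Partition (nn k)) (n : ℕ) (k : Fin r) :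
    Del ν n k - Del ν (n + 1) k = ((ν k).parts.count n : ℤ) := by
  unfold Del
  rw [card_filter_split n (ν k).parts]
  push_cast
  ring

lemma parts_le_sMax (ν : ∀ k : Fin r, Nat.Partition (nn k)) (k : Fin r) {h : ℕ}
    (hh : h ∈ (ν k).parts) : h ≤ sMax ν := by
  unfold sMax
  exact le_trans (Multiset.le_sup hh) (Finset.le_sup (f := fun k => (ν k).parts.sup) (Finset.mem_univ k))

lemma Del_eq_zero (ν : ∀ k : Fin r, Nat.Partition (nn k)) {n : ℕ} (hn : sMax ν < n)
    (k : Fin r) : Del ν n k = 0 := by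
  show ((Multiset.card _ : ℕ) : ℤ) = 0
  norm_cast
  rw [Multiset.card_eq_zero]
  rw [Multiset.filter_eq_nil]
  intro a ha
  have := parts_le_sMax ν k ha
  omega

lemma count_eq_zero (ν : ∀ k : Fin r, Nat.Partition (nn k)) {n : ℕ} (hn : sMax ν < n)
    (k : Fin r) : (ν k).parts.count n = 0 := by
  rw [Multiset.count_eq_zero]
  intro hmem
  have := parts_le_sMax ν k hmem
  omega

lemma exists_Del_pos (ν : ∀ k : Fin r, Nat.Partition (nn k)) {n : ℕ} (h1 : 1 ≤ n)
    (h2 : n ≤ sMax ν) : ∃ k, 0 < Del ν n k := by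
  by_contra hc
  push_neg at hc
  have hall : ∀ k, ∀ h ∈ (ν k).parts, h < n := by
    intro k h hh
    by_contra hge
    push_neg at hge
    have hmem : h ∈ (ν k).parts.filter (fun x => n ≤ x) :=
      Multiset.mem_filter.mpr ⟨hh, hge⟩
    have hpos : 0 < Multiset.card ((ν k).parts.filter fun x => n ≤ x) :=
      Multiset.card_pos_iff_exists_mem.mpr ⟨h, hmem⟩
    have hle := hc k
    unfold Del at hle
    omega
  have hsm : sMax ν ≤ n - 1 := by
    apply Finset.sup_le
    intro k _
    apply Multiset.sup_le.mpr
    intro b hb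
    have := hall k b hb
    omega
  omega

lemma dnu_stab (ν : ∀ k : Fin r, Nat.Partition (nn k)) {n : ℕ} (h : sMax ν ≤ n) :
    dnu ν n = dnu ν (sMax ν) := by
  induction n, h using Nat.le_induction with
  | base => rfl
  | succ t ht ih =>
    funext k
    rw [dnu_succ, Del_eq_zero ν (by omega) k, add_zero]
    exact congrFun ih k

lemma dnu_last (ν : ∀ k : Fin r, Nat.Partition (nn k)) {n : ℕ} (h : sMax ν ≤ n) (k : Fin r) :
    dnu ν n k = (nn k : ℤ) := by
  rw [dnu_eq]
  have hmc : ((ν k).parts.map fun h : ℕ => min (n:ℤ) (h:ℤ))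
      = ((ν k).parts.map fun h : ℕ => (h:ℤ)) := by
    apply Multiset.map_congr rfl
    intro x hx
    have h1 := parts_le_sMax ν k hx
    omega
  have hc : (((ν k).parts.sum : ℕ) : ℤ) = ((ν k).parts.map fun h : ℕ => (h:ℤ)).sum :=
    Nat.cast_multiset_sum _
  rw [hmc, ← hc]
  exact_mod_cast (ν k).parts_sum

lemma Lab_length (ν : ∀ k : Fin r, Nat.Partition (nn k)) :
    (Lab ν).length = sMax ν + 1 := by
  simp [Lab]

lemma dAt_Lab (ν : ∀ k : Fin r, Nat.Partition (nn k)) {n : ℕ} (h : n ≤ sMax ν) :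
    dAt (Lab ν) n = dnu ν n := by
  have hlt : n < (Lab ν).length := by rw [Lab_length]; omega
  rw [dAt, List.getD_eq_getElem _ _ hlt]
  simp [Lab]

lemma deltaAt_Lab (ν : ∀ k : Fin r, Nat.Partition (nn k)) {i : ℕ} (h : 1 ≤ i) :
    deltaAt (Lab ν) i = Del ν i := by
  rcases le_or_gt i (sMax ν) with hle | hgt
  · rw [deltaAt, if_pos (by rw [Lab_length]; omega)]
    funext k
    obtain ⟨t, rfl⟩ : ∃ t, i = t + 1 := ⟨i - 1, by omega⟩
    have e1 : t + 1 - 1 = t := rfl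
    rw [e1, dAt_Lab ν hle, dAt_Lab ν (by omega : t ≤ sMax ν)]
    rw [Pi.sub_apply, dnu_succ]
    ring
  · rw [deltaAt, if_neg (by rw [Lab_length]; omega)]
    funext k
    rw [Del_eq_zero ν hgt k]
    simp

variable (C : Matrix (Fin r) (Fin r) ℤ) (ℓ : Fin N → Fin r) (m : Fin N → ℕ)

lemma Pfun_mono {n n' : ℕ} (h : n ≤ n') (k : Fin r) (d : Fin r → ℤ) :
    Pfun C ℓ m n k d ≤ Pfun C ℓ m n' k d := by
  unfold Pfun
  apply sub_le_sub_right
  apply Finset.sum_le_sum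
  intro a _
  by_cases hk : k = ℓ a
  · simp only [hk, eq_self_iff_true, if_true, mul_one]
    exact min_le_min (by exact_mod_cast h) le_rfl
  · simp [hk]

lemma Pfun_zero (k : Fin r) : Pfun C ℓ m 0 k 0 = 0 := by
  unfold Pfun
  have h0 : ∀ a : Fin N, min (((0:ℕ)):ℤ) ((m a):ℤ) = 0 := fun a => by omega
  simp [h0]

def GoodP (ν : ∀ k : Fin r, Nat.Partition (nn k)) : Prop :=
  ∀ (n : ℕ) (k : Fin r), 0 ≤ Pfun C ℓ m (n + 1) k (dnu ν (n + 1))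

lemma Lab_valid (ν : ∀ k : Fin r, Nat.Partition (nn k)) (hg : GoodP C ℓ m ν) :
    IsValidLabel C ℓ m (Lab ν) := by
  refine ⟨?_, ?_, ?_, ?_, ?_⟩
  · intro hnil
    have := Lab_length ν
    rw [hnil] at this
    simp at this
  · rw [dAt_Lab ν (Nat.zero_le _), dnu_zero]
  · intro i h1 hi
    rw [Lab_length] at hi
    have hle : i ≤ sMax ν := by omega
    rw [dAt_Lab ν (by omega), dAt_Lab ν hle]
    obtain ⟨t, rfl⟩ : ∃ t, i = t + 1 := ⟨i - 1, by omega⟩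
    have e1 : t + 1 - 1 = t := rfl
    rw [e1, lt_iff_le_and_ne]
    constructor
    · intro k
      rw [dnu_succ]
      have := Del_nonneg ν (t + 1) k
      linarith
    · obtain ⟨k0, hk0⟩ := exists_Del_pos ν (by omega) hle
      intro heq
      have hck := congrFun heq k0
      rw [dnu_succ] at hck
      linarith
  · intro n hn k
    rw [Lab_length] at hn
    rw [dAt_Lab ν (by omega)]
    cases n with
    | zero => simp [dnu_zero, Pfun_zero]
    | succ t => exact hg t k
  · intro i h1 hi
    rw [Lab_length] at hi
    rw [deltaAt_Lab ν h1, deltaAt_Lab ν (by omega)]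
    intro k
    have hsub := Del_sub_count ν i k
    have hnn : (0:ℤ) ≤ ((ν k).parts.count i : ℤ) := Int.natCast_nonneg _
    linarith

lemma Lab_last (ν : ∀ k : Fin r, Nat.Partition (nn k)) :
    dAt (Lab ν) ((Lab ν).length - 1) = fun k => (nn k : ℤ) := by
  have e : (Lab ν).length - 1 = sMax ν := by rw [Lab_length]; omega
  rw [e, dAt_Lab ν le_rfl]
  funext k
  exact dnu_last ν le_rfl k

lemma tprod_good (ν : ∀ k : Fin r, Nat.Partition (nn k)) (hg : GoodP C ℓ m ν) :
    (∏' n : ℕ, ∏ k : Fin r,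
      ibinom (Pfun C ℓ m (n + 1) k (dnu ν (n + 1)) + ((ν k).parts.count (n + 1) : ℤ))
        (((ν k).parts.count (n + 1) : ℤ))) = mult C ℓ m (Lab ν) := by
  have h1 : ∀ n ∉ Finset.range (sMax ν), (∏ k : Fin r,
      ibinom (Pfun C ℓ m (n + 1) k (dnu ν (n + 1)) + ((ν k).parts.count (n + 1) : ℤ))
        (((ν k).parts.count (n + 1) : ℤ))) = 1 := by
    intro n hn
    rw [Finset.mem_range, not_lt] at hn
    apply Finset.prod_eq_one
    intro k _
    rw [count_eq_zero ν (by omega) k]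
    simp only [Nat.cast_zero, add_zero]
    exact ibinom_zero (hg n k)
  have hshift := prod_range_shift (fun i => ∏ k : Fin r,
    ibinom (Pfun C ℓ m i k (dnu ν i) + ((ν k).parts.count i : ℤ))
      (((ν k).parts.count i : ℤ))) (sMax ν)
  beta_reduce at hshift
  rw [tprod_eq_prod h1, hshift]
  unfold mult
  have e : (Lab ν).length - 1 = sMax ν := by rw [Lab_length]; omega
  rw [e]
  apply Finset.prod_congr rfl
  intro n hn
  rw [Finset.mem_Icc] at hn
  apply Finset.prod_congr rfl
  intro k _
  rw [dAt_Lab ν (by omega), deltaAt_Lab ν (by omega), deltaAt_Lab ν (by omega),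
    Del_sub_count]

lemma tprod_bad (ν : ∀ k : Fin r, Nat.Partition (nn k)) (hg : ¬ GoodP C ℓ m ν) :
    (∏' n : ℕ, ∏ k : Fin r,
      ibinom (Pfun C ℓ m (n + 1) k (dnu ν (n + 1)) + ((ν k).parts.count (n + 1) : ℤ))
        (((ν k).parts.count (n + 1) : ℤ))) = 0 := by
  unfold GoodP at hg
  push_neg at hg
  obtain ⟨n0, k0, hneg⟩ := hg
  apply HasProd.tprod_eq
  have hf0 : (∏ k : Fin r,
      ibinom (Pfun C ℓ m (n0 + 1) k (dnu ν (n0 + 1)) + ((ν k).parts.count (n0 + 1) : ℤ))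
        (((ν k).parts.count (n0 + 1) : ℤ))) = 0 := by
    apply Finset.prod_eq_zero (Finset.mem_univ k0)
    apply ibinom_neg
    linarith
  have h0 : ∀ᶠ t : Finset ℕ in Filter.atTop,
      (∏ i ∈ t, ∏ k : Fin r,
        ibinom (Pfun C ℓ m (i + 1) k (dnu ν (i + 1)) + ((ν k).parts.count (i + 1) : ℤ))
          (((ν k).parts.count (i + 1) : ℤ))) = 0 := by
    filter_upwards [Filter.eventually_ge_atTop ({n0} : Finset ℕ)] with t ht
    exact Finset.prod_eq_zero (ht (Finset.mem_singleton_self n0)) hf0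
  exact Filter.Tendsto.congr' (h0.mono fun t h => h.symm) tendsto_const_nhds

lemma Lab_inj (ν ν' : ∀ k : Fin r, Nat.Partition (nn k)) (h : Lab ν = Lab ν') : ν = ν' := by
  have hlen := congrArg List.length h
  rw [Lab_length, Lab_length] at hlen
  have hsm : sMax ν = sMax ν' := by omega
  have hd : ∀ n, n ≤ sMax ν → dnu ν n = dnu ν' n := by
    intro n hn
    have e1 := dAt_Lab ν hn
    have e2 := dAt_Lab ν' (hsm ▸ hn)
    rw [← e1, ← e2, dAt, dAt, h]
  funext k
  apply Nat.Partition.ext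
  apply Multiset.ext.mpr
  intro a
  rcases Nat.eq_zero_or_pos a with rfl | hpos
  · rw [Multiset.count_eq_zero_of_notMem, Multiset.count_eq_zero_of_notMem]
    · intro hmem; exact absurd ((ν' k).parts_pos hmem) (lt_irrefl 0)
    · intro hmem; exact absurd ((ν k).parts_pos hmem) (lt_irrefl 0)
  rcases le_or_gt a (sMax ν) with hle | hgt
  · have hDel : ∀ t, t + 1 ≤ sMax ν → Del ν (t + 1) k = Del ν' (t + 1) k := by
      intro t ht
      have u := dnu_succ ν t k
      have u' := dnu_succ ν' t k
      rw [hd t (by omega), hd (t + 1) (by omega)] at u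
      linarith
    obtain ⟨t, rfl⟩ : ∃ t, a = t + 1 := ⟨a - 1, by omega⟩
    have e1 := hDel t hle
    have e2 : Del ν (t + 1 + 1) k = Del ν' (t + 1 + 1) k := by
      rcases lt_or_eq_of_le hle with hlt | heq
      · exact hDel (t + 1) (by omega)
      · rw [Del_eq_zero ν (by omega) k, Del_eq_zero ν' (by omega) k]
    have c1 := Del_sub_count ν (t + 1) k
    have c2 := Del_sub_count ν' (t + 1) k
    have : (((ν k).parts.count (t + 1) : ℕ) : ℤ) = (((ν' k).parts.count (t + 1) : ℕ) : ℤ) := by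
      linarith
    exact_mod_cast this
  · rw [count_eq_zero ν hgt k, count_eq_zero ν' (by omega) k]

lemma exists_nu (L : List (Fin r → ℤ)) (hv : IsValidLabel C ℓ m L)
    (hlast : dAt L (L.length - 1) = fun k => (nn k : ℤ)) :
    ∃ ν : ∀ k : Fin r, Nat.Partition (nn k), GoodP C ℓ m ν ∧ Lab ν = L := by
  obtain ⟨hne, h0, hstrict, hP, hdelta⟩ := hv
  set s := L.length - 1 with hs
  have hlen : L.length = s + 1 := by
    have hl : L.length ≠ 0 := fun hl => hne (List.length_eq_zero_iff.mp hl)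
    omega
  have hcnn : ∀ h k, 1 ≤ h → h ≤ s → 0 ≤ deltaAt L h k - deltaAt L (h + 1) k := by
    intro h k h1 h2
    exact sub_nonneg.mpr (hdelta h h1 (by omega) k)
  set c : ℕ → Fin r → ℕ := fun h k => (deltaAt L h k - deltaAt L (h + 1) k).toNat with hc
  have hcz : ∀ h k, 1 ≤ h → h ≤ s → (c h k : ℤ) = deltaAt L h k - deltaAt L (h + 1) k := by
    intro h k h1 h2
    exact Int.toNat_of_nonneg (hcnn h k h1 h2)
  set M : Fin r → Multiset ℕ := fun k => ∑ h ∈ Finset.Icc 1 s, Multiset.replicate (c h k) h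
    with hM
  have hmem : ∀ k, ∀ i ∈ M k, 1 ≤ i ∧ i ≤ s := by
    intro k i hi
    rw [Multiset.mem_sum] at hi
    obtain ⟨h, hh, hrep⟩ := hi
    rw [Finset.mem_Icc] at hh
    rw [Multiset.eq_of_mem_replicate hrep]
    exact hh
  have hz1 : ∀ k, deltaAt L (s + 1) k = 0 := by
    intro k
    rw [deltaAt, if_neg (by omega)]
    simp
  have hKEY : ∀ (k : Fin r) (n : ℕ), ((M k).map fun h : ℕ => min (n:ℤ) (h:ℤ)).sum = dAt L (min n s) k := by
    intro k n
    rw [hM]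
    rw [map_sum_replicate]
    have step1 : ∑ h ∈ Finset.Icc 1 s, (c h k : ℤ) * min (n:ℤ) (h:ℤ)
        = ∑ h ∈ Finset.Icc 1 s, ((fun h => deltaAt L h k) h - (fun h => deltaAt L h k) (h + 1))
            * min (n:ℤ) (h:ℤ) := by
      apply Finset.sum_congr rfl
      intro h hh
      rw [Finset.mem_Icc] at hh
      beta_reduce
      rw [hcz h k hh.1 hh.2]
    rw [step1, abelmin (fun h => deltaAt L h k) n s]
    beta_reduce
    rw [hz1 k, zero_mul, sub_zero]
    have step2 : ∑ h ∈ Finset.Icc 1 (min n s), deltaAt L h k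
        = ∑ h ∈ Finset.Icc 1 (min n s), ((fun h => dAt L h k) h - (fun h => dAt L h k) (h - 1)) := by
      apply Finset.sum_congr rfl
      intro h hh
      rw [Finset.mem_Icc] at hh
      beta_reduce
      rw [deltaAt, if_pos (by omega)]
      simp
    rw [step2, tele (fun h => dAt L h k)]
    beta_reduce
    rw [congrFun h0 k]
    simp
  have hMsum : ∀ k, (M k).sum = nn k := by
    intro k
    have h1 : (((M k).sum : ℕ) : ℤ) = ((M k).map fun h : ℕ => (h:ℤ)).sum :=
      Nat.cast_multiset_sum _
    have h2 : ((M k).map fun h : ℕ => (h:ℤ)).sum = ((M k).map fun h : ℕ => min (s:ℤ) (h:ℤ)).sum := by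
      apply congrArg Multiset.sum
      apply Multiset.map_congr rfl
      intro x hx
      have := hmem k x hx
      omega
    have h3 := hKEY k s
    rw [min_self] at h3
    have h6 : dAt L s k = (nn k : ℤ) := congrFun hlast k
    have : (((M k).sum : ℕ) : ℤ) = ((nn k : ℕ) : ℤ) := by rw [h1, h2, h3, h6]
    exact_mod_cast this
  set ν : ∀ k : Fin r, Nat.Partition (nn k) :=
    fun k => ⟨M k, fun hi => by have := hmem _ _ hi; omega, hMsum k⟩ with hν
  have hparts : ∀ k, (ν k).parts = M k := fun k => rfl
  have hdnu : ∀ n k, dnu ν n k = dAt L (min n s) k := by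
    intro n k
    rw [dnu_eq, hparts k, hKEY k n]
  have hsmax : sMax ν = s := by
    apply le_antisymm
    · apply Finset.sup_le
      intro k _
      apply Multiset.sup_le.mpr
      intro b hb
      rw [hparts k] at hb
      exact (hmem k b hb).2
    · rcases Nat.eq_zero_or_pos s with hs0 | hs1
      · omega
      · have hstr := hstrict s hs1 (by omega)
        rw [lt_iff_le_and_ne] at hstr
        obtain ⟨hle', hne'⟩ := hstr
        have hex : ∃ k0, dAt L (s - 1) k0 ≠ dAt L s k0 := by
          by_contra hcon
          push_neg at hcon
          exact hne' (funext hcon)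
        obtain ⟨k0, hk0⟩ := hex
        have hlt0 : 0 < deltaAt L s k0 := by
          rw [deltaAt, if_pos (by omega)]
          have hle0 := hle' k0
          rw [Pi.sub_apply]
          have := lt_of_le_of_ne hle0 hk0
          linarith
        have hc0 : 0 < c s k0 := by
          have hcc := hcz s k0 hs1 le_rfl
          rw [hz1 k0, sub_zero] at hcc
          have h9 : (0:ℤ) < (c s k0 : ℤ) := by rw [hcc]; exact hlt0
          exact_mod_cast h9
        have hmem0 : s ∈ M k0 :=
          Multiset.mem_sum.mpr ⟨s, Finset.mem_Icc.mpr ⟨hs1, le_rfl⟩,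
            Multiset.mem_replicate.mpr ⟨by omega, rfl⟩⟩
        calc s ≤ (ν k0).parts.sup := Multiset.le_sup (by rwa [hparts])
          _ ≤ sMax ν := Finset.le_sup (f := fun k => (ν k).parts.sup) (Finset.mem_univ k0)
  have hLab : Lab ν = L := by
    apply List.ext_getElem
    · rw [Lab_length, hsmax, hlen]
    · intro i h1 h2
      have hi : i ≤ s := by rw [Lab_length, hsmax] at h1; omega
      have e1 : (Lab ν)[i] = dnu ν i := by simp [Lab]
      have e2 : L[i] = dAt L i := (List.getD_eq_getElem L _ (by omega)).symm
      rw [e1, e2]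
      funext k
      rw [hdnu i k, min_eq_left hi]
  refine ⟨ν, ?_, hLab⟩
  intro n k
  rcases le_or_gt (n + 1) s with hle | hgt
  · have hfun : dnu ν (n + 1) = dAt L (n + 1) :=
      funext fun k' => by rw [hdnu, min_eq_left hle]
    rw [hfun]
    exact hP (n + 1) (by omega) k
  · have hfun : dnu ν (n + 1) = dAt L s :=
      funext fun k' => by rw [hdnu, min_eq_right (by omega)]
    rw [hfun]
    exact le_trans (hP s (by omega) k) (Pfun_mono C ℓ m (by omega) k _)

lemma mult_pos_of_valid (L : List (Fin r → ℤ)) (hv : IsValidLabel C ℓ m L) :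
    0 < mult C ℓ m L := by
  obtain ⟨hne, h0, hstrict, hP, hdelta⟩ := hv
  have hlen : 1 ≤ L.length := List.length_pos_iff.mpr hne
  unfold mult
  apply Finset.prod_pos
  intro n hn
  rw [Finset.mem_Icc] at hn
  apply Finset.prod_pos
  intro k _
  have h1 : n < L.length := by omega
  apply ibinom_pos
  · have hd := hdelta n hn.1 h1 k
    linarith
  · have hPk := hP n h1 k
    linarith

end KR

theorem stmt0 {r N : ℕ} (hr : 0 < r) (hN : 0 < N)
    (C : Matrix (Fin r) (Fin r) ℤ)
    (hdiag : ∀ i, C i i = 2)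
    (hsym : ∀ i j, C i j = C j i)
    (hoff : ∀ i j, i ≠ j → C i j = 0 ∨ C i j = -1)
    (ℓ : Fin N → Fin r) (m : Fin N → ℕ) (nn : Fin r → ℕ)
    (S : Set (List (Fin r → ℤ)))
    (hS : S = {L | IsValidLabel C ℓ m L ∧ dAt L (L.length - 1) = fun k => (nn k : ℤ)}) :
    S.Finite ∧
    ((∑ ν : ∀ k : Fin r, Nat.Partition (nn k),
        ∏' n : ℕ, ∏ k : Fin r,
          ibinom (Pfun C ℓ m (n + 1) k (dnu ν (n + 1)) + ((ν k).parts.count (n + 1) : ℤ))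
            (((ν k).parts.count (n + 1) : ℤ)))
      = ∑ᶠ L ∈ S, mult C ℓ m L) ∧
    ∀ L ∈ S, 0 < mult C ℓ m L := by
  classical
  set Good : Finset (∀ k : Fin r, Nat.Partition (nn k)) :=
    Finset.univ.filter (fun ν => GoodP C ℓ m ν) with hGood
  have himg : S = ↑(Good.image (Lab)) := by
    rw [hS]
    ext L
    simp only [Set.mem_setOf_eq, Finset.coe_image, Set.mem_image, Finset.mem_coe,
      Finset.mem_filter, Finset.mem_univ, true_and, hGood]
    constructor
    · rintro ⟨hv, hlast⟩
      obtain ⟨ν, hν1, hν2⟩ := exists_nu C ℓ m L hv hlast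
      exact ⟨ν, hν1, hν2⟩
    · rintro ⟨ν, hν1, rfl⟩
      exact ⟨Lab_valid C ℓ m ν hν1, Lab_last ν⟩
  refine ⟨himg ▸ (Good.image Lab).finite_toSet, ?_, ?_⟩
  · rw [himg, finsum_mem_coe_finset,
      Finset.sum_image (fun x _ y _ hxy => Lab_inj x y hxy)]
    rw [← Finset.sum_congr rfl (fun ν hν => tprod_good C ℓ m ν (Finset.mem_filter.mp hν).2)]
    exact (Finset.sum_subset (Finset.subset_univ Good) (fun ν _ hν => by
      exact tprod_bad C ℓ m ν (by simpa [hGood] using hν))).symm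
  · intro L hL
    rw [himg] at hL
    simp only [Finset.coe_image, Set.mem_image, Finset.mem_coe, Finset.mem_filter] at hL
    obtain ⟨ν, hν1, rfl⟩ := hL
    exact mult_pos_of_valid C ℓ m _ (Lab_valid C ℓ m ν (Finset.mem_filter.mp hν1).2)
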